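/- For every joint probability distribution P on X_1 × X_2 with marginals P_1, P_2, the conditional mutual information satisfies I_P(X_2;Y_1|X_1) ≤ (P_1(0) − P(0,0))·C_{2,0} + (1 − P_1(0) − P_2(0) + P(0,0))·C_{2,1}. -/

import Mathlib

open Real BigOperators Finset

/-- Entropy of a finite probability vector, with the convention `0 * log 0 = 0`
(automatic since `Real.log 0 = 0`). -/
noncomputable def ent {n : ℕ} (p : Fin n → ℝ) : ℝ := -∑ y, p y * Real.log (p y)

/-- `Q` is a probability distribution on `Fin n`. -/
def IsProbDist {n : ℕ} (Q : Fin n → ℝ) : Prop := (∀ x, 0 ≤ Q x) ∧ ∑ x, Q x = 1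

/-- `P` is a joint probability distribution. -/
def IsJointProbDist {m n : ℕ} (P : Fin m → Fin n → ℝ) : Prop :=
  (∀ x1 x2, 0 ≤ P x1 x2) ∧ ∑ x1, ∑ x2, P x1 x2 = 1

/-- First marginal `P_1`. -/
noncomputable def marg1 {m n : ℕ} (P : Fin m → Fin n → ℝ) (x1 : Fin m) : ℝ := ∑ x2, P x1 x2

/-- Second marginal `P_2`. -/
noncomputable def marg2 {m n : ℕ} (P : Fin m → Fin n → ℝ) (x2 : Fin n) : ℝ := ∑ x1, P x1 x2

/-- Conditional mutual information `I_P(X₁;Y₂|X₂)`; terms with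
`P x1 x2 * W2 x1 x2 y2 = 0` vanish, and summands with `marg2 P x2 = 0` vanish
since then `P x1 x2 = 0`. -/
noncomputable def condMI1 {m n t : ℕ} (P : Fin m → Fin n → ℝ)
    (W2 : Fin m → Fin n → Fin t → ℝ) : ℝ :=
  ∑ x2, ∑ x1, ∑ y2, P x1 x2 * W2 x1 x2 y2 *
    Real.log (W2 x1 x2 y2 / ((∑ x1', P x1' x2 * W2 x1' x2 y2) / marg2 P x2))

/-- Conditional mutual information `I_P(X₂;Y₁|X₁)`. -/
noncomputable def condMI2 {m n t : ℕ} (P : Fin m → Fin n → ℝ)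
    (W1 : Fin m → Fin n → Fin t → ℝ) : ℝ :=
  ∑ x1, ∑ x2, ∑ y1, P x1 x2 * W1 x1 x2 y1 *
    Real.log (W1 x1 x2 y1 / ((∑ x2', P x1 x2' * W1 x1 x2' y1) / marg1 P x1))

/-- Structural assumptions of a generalized push-to-talk two-way channel with
input alphabets `Fin (r1+3)`, `Fin (r2+3)` and output alphabets `Fin (s1+2)`,
`Fin (s2+2)`: both marginal channels are transition matrices; the row of
input `0` of each user is uniform; for each state, the nonzero-input rows are
permutations of the row of input `1` and have constant column sums
(weak symmetry). -/
def GenPTT {r1 r2 s1 s2 : ℕ} (W1 : Fin (r1 + 3) → Fin (r2 + 3) → Fin (s1 + 2) → ℝ)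
    (W2 : Fin (r1 + 3) → Fin (r2 + 3) → Fin (s2 + 2) → ℝ) : Prop :=
  (∀ x1 x2 y1, 0 ≤ W1 x1 x2 y1) ∧ (∀ x1 x2 y2, 0 ≤ W2 x1 x2 y2) ∧
  (∀ x1 x2, ∑ y1, W1 x1 x2 y1 = 1) ∧ (∀ x1 x2, ∑ y2, W2 x1 x2 y2 = 1) ∧
  (∀ x2 y2, W2 0 x2 y2 = 1 / ((s2 : ℝ) + 2)) ∧
  (∀ x2, ∀ x1 : Fin (r1 + 3), x1 ≠ 0 →
    ∃ σ : Equiv.Perm (Fin (s2 + 2)), ∀ y2, W2 x1 x2 y2 = W2 1 x2 (σ y2)) ∧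
  (∀ x2, ∀ y2 y2' : Fin (s2 + 2),
    ∑ x1 ∈ Finset.univ.filter (fun x1 => x1 ≠ (0 : Fin (r1 + 3))), W2 x1 x2 y2 =
    ∑ x1 ∈ Finset.univ.filter (fun x1 => x1 ≠ (0 : Fin (r1 + 3))), W2 x1 x2 y2') ∧
  (∀ x1 y1, W1 x1 0 y1 = 1 / ((s1 : ℝ) + 2)) ∧
  (∀ x1, ∀ x2 : Fin (r2 + 3), x2 ≠ 0 →
    ∃ σ : Equiv.Perm (Fin (s1 + 2)), ∀ y1, W1 x1 x2 y1 = W1 x1 1 (σ y1)) ∧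
  (∀ x1, ∀ y1 y1' : Fin (s1 + 2),
    ∑ x2 ∈ Finset.univ.filter (fun x2 => x2 ≠ (0 : Fin (r2 + 3))), W1 x1 x2 y1 =
    ∑ x2 ∈ Finset.univ.filter (fun x2 => x2 ≠ (0 : Fin (r2 + 3))), W1 x1 x2 y1')

/-- `C_{1,x₂} = log s₂ − H(row of input 1 of Q_{1,x₂})`. -/
noncomputable def C1 {r1 r2 s2 : ℕ} (W2 : Fin (r1 + 3) → Fin (r2 + 3) → Fin (s2 + 2) → ℝ)
    (x2 : Fin (r2 + 3)) : ℝ := Real.log ((s2 : ℝ) + 2) - ent (fun y2 => W2 1 x2 y2)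

/-- `C_{2,x₁} = log s₁ − H(row of input 1 of Q_{2,x₁})`. -/
noncomputable def C2 {r1 r2 s1 : ℕ} (W1 : Fin (r1 + 3) → Fin (r2 + 3) → Fin (s1 + 2) → ℝ)
    (x1 : Fin (r1 + 3)) : ℝ := Real.log ((s1 : ℝ) + 2) - ent (fun y1 => W1 x1 1 y1)

/-- The channel symmetry property: `C_{1,x₂} = C_{1,1}` for all `x₂ ≠ 0` and
`C_{2,x₁} = C_{2,1}` for all `x₁ ≠ 0`. -/
def SymProp {r1 r2 s1 s2 : ℕ} (W1 : Fin (r1 + 3) → Fin (r2 + 3) → Fin (s1 + 2) → ℝ)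
    (W2 : Fin (r1 + 3) → Fin (r2 + 3) → Fin (s2 + 2) → ℝ) : Prop :=
  (∀ x2 : Fin (r2 + 3), x2 ≠ 0 → C1 W2 x2 = C1 W2 1) ∧
  (∀ x1 : Fin (r1 + 3), x1 ≠ 0 → C2 W1 x1 = C2 W1 1)

lemma gibbs_aux {k : ℕ} (Q : Fin (k + 2) → ℝ) (hQ : ∀ y, 0 ≤ Q y) {A : ℝ} (hA : 0 < A)
    (hs : ∑ y, Q y = A) :
    A * Real.log A - A * Real.log ((k : ℝ) + 2) ≤ ∑ y, Q y * Real.log (Q y) := by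
  have hs' : (0 : ℝ) < (k : ℝ) + 2 := by positivity
  have key : ∀ y, Q y * Real.log A - Q y * Real.log ((k : ℝ) + 2) - Q y * Real.log (Q y)
      ≤ A / ((k : ℝ) + 2) - Q y := by
    intro y
    rcases eq_or_lt_of_le (hQ y) with h0 | h0
    · rw [← h0]; simp; positivity
    · have ht : 0 < (A / ((k : ℝ) + 2)) / Q y := by positivity
      have hlog := Real.log_le_sub_one_of_pos ht
      rw [Real.log_div (by positivity) (ne_of_gt h0),
        Real.log_div (ne_of_gt hA) (ne_of_gt hs')] at hlog
      have h2 := mul_le_mul_of_nonneg_left hlog h0.le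
      have heq : Q y * ((A / ((k : ℝ) + 2)) / Q y - 1) = A / ((k : ℝ) + 2) - Q y := by
        field_simp
      rw [heq] at h2
      calc Q y * Real.log A - Q y * Real.log ((k : ℝ) + 2) - Q y * Real.log (Q y)
          = Q y * (Real.log A - Real.log ((k : ℝ) + 2) - Real.log (Q y)) := by ring
        _ ≤ A / ((k : ℝ) + 2) - Q y := h2
  have hsum := Finset.sum_le_sum (fun y (_ : y ∈ Finset.univ) => key y)
  have hL : ∑ y, (Q y * Real.log A - Q y * Real.log ((k : ℝ) + 2) - Q y * Real.log (Q y))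
      = A * Real.log A - A * Real.log ((k : ℝ) + 2) - ∑ y, Q y * Real.log (Q y) := by
    rw [Finset.sum_sub_distrib, Finset.sum_sub_distrib, ← Finset.sum_mul, ← Finset.sum_mul, hs]
  have hR : ∑ _y : Fin (k + 2), (A / ((k : ℝ) + 2) - Q _y) = ∑ y, (A / ((k : ℝ) + 2) - Q y) := rfl
  have hR' : ∑ y, (A / ((k : ℝ) + 2) - Q y) = 0 := by
    rw [Finset.sum_sub_distrib, Finset.sum_const, Finset.card_univ, Fintype.card_fin, hs,
      nsmul_eq_mul]
    push_cast
    field_simp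
    ring
  rw [hL, hR'] at hsum
  linarith

lemma inner_bound_aux {n s : ℕ} (a : Fin (n + 1) → ℝ) (W : Fin (n + 1) → Fin (s + 2) → ℝ)
    (ha : ∀ x, 0 ≤ a x) (hW0 : ∀ x y, 0 ≤ W x y) (hWs : ∀ x, ∑ y, W x y = 1)
    (hU : ∀ y, W 0 y = 1 / ((s : ℝ) + 2))
    (hperm : ∀ x : Fin (n + 1), x ≠ 0 →
      ∃ σ : Equiv.Perm (Fin (s + 2)), ∀ y, W x y = W 1 (σ y)) :
    ∑ x, ∑ y, a x * W x y * Real.log (W x y / ((∑ x', a x' * W x' y) / ∑ x', a x')) ≤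
      ((∑ x', a x') - a 0) * (Real.log ((s : ℝ) + 2) - ent (fun y => W 1 y)) := by
  have hAnn : 0 ≤ ∑ x', a x' := Finset.sum_nonneg fun x _ => ha x
  rcases eq_or_lt_of_le hAnn with hA0 | hA0
  · have hz : ∀ x, a x = 0 := by
      intro x
      exact (Finset.sum_eq_zero_iff_of_nonneg (fun x _ => ha x)).mp hA0.symm x (Finset.mem_univ x)
    have hL : (∑ x, ∑ y, a x * W x y *
        Real.log (W x y / ((∑ x', a x' * W x' y) / ∑ x', a x'))) = 0 :=
      Finset.sum_eq_zero fun x _ => Finset.sum_eq_zero fun y _ => by rw [hz x]; ring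
    rw [hL, ← hA0, hz 0]
    simp
  · set A := ∑ x', a x' with hAdef
    have hsplit : ∀ x y, a x * W x y * Real.log (W x y / ((∑ x', a x' * W x' y) / A)) =
        a x * W x y * Real.log (W x y) - a x * W x y * Real.log (∑ x', a x' * W x' y)
          + a x * W x y * Real.log A := by
      intro x y
      rcases eq_or_ne (a x * W x y) 0 with h | h
      · rw [h]; ring
      · have hW : W x y ≠ 0 := fun h' => h (by rw [h']; ring)
        have hQpos : 0 < ∑ x', a x' * W x' y := by
          have h1 : 0 < a x * W x y :=
            lt_of_le_of_ne (mul_nonneg (ha x) (hW0 x y)) (Ne.symm h)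
          exact lt_of_lt_of_le h1 (Finset.single_le_sum
            (fun i (_ : i ∈ Finset.univ) => mul_nonneg (ha i) (hW0 i y)) (Finset.mem_univ x))
        rw [Real.log_div hW (ne_of_gt (div_pos hQpos hA0)),
          Real.log_div (ne_of_gt hQpos) (ne_of_gt hA0)]
        ring
    have e2 : ∑ x, ∑ y, a x * W x y * Real.log (∑ x', a x' * W x' y)
        = ∑ y, (∑ x', a x' * W x' y) * Real.log (∑ x', a x' * W x' y) := by
      rw [Finset.sum_comm]
      exact Finset.sum_congr rfl fun y _ => (Finset.sum_mul _ _ _).symm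
    have e3 : ∑ x, ∑ y, a x * W x y * Real.log A = A * Real.log A := by
      calc ∑ x, ∑ y, a x * W x y * Real.log A
          = ∑ x, a x * (∑ y, W x y) * Real.log A := by
            refine Finset.sum_congr rfl fun x _ => ?_
            rw [Finset.mul_sum, Finset.sum_mul]
        _ = ∑ x, a x * Real.log A := by
            refine Finset.sum_congr rfl fun x _ => ?_
            rw [hWs x]; ring
        _ = A * Real.log A := by rw [← Finset.sum_mul]
    have e1row0 : ∑ y, W 0 y * Real.log (W 0 y) = -Real.log ((s : ℝ) + 2) := by
      have hne : ((s : ℝ) + 2) ≠ 0 := by positivity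
      simp only [hU]
      rw [Finset.sum_const, Finset.card_univ, Fintype.card_fin, nsmul_eq_mul, one_div,
        Real.log_inv]
      push_cast
      field_simp
    have e1rowx : ∀ x : Fin (n + 1), x ≠ 0 →
        ∑ y, W x y * Real.log (W x y) = ∑ y, W 1 y * Real.log (W 1 y) := by
      intro x hx
      obtain ⟨σ, hσ⟩ := hperm x hx
      calc ∑ y, W x y * Real.log (W x y) = ∑ y, W 1 (σ y) * Real.log (W 1 (σ y)) := by
            exact Finset.sum_congr rfl fun y _ => by rw [hσ y]
        _ = ∑ y, W 1 y * Real.log (W 1 y) :=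
            Equiv.sum_comp σ (fun y => W 1 y * Real.log (W 1 y))
    have eT1 : ∑ x, ∑ y, a x * W x y * Real.log (W x y)
        = a 0 * (-Real.log ((s : ℝ) + 2)) + (A - a 0) * ∑ y, W 1 y * Real.log (W 1 y) := by
      have estep : ∀ x : Fin (n + 1), ∑ y, a x * W x y * Real.log (W x y)
          = a x * ∑ y, W x y * Real.log (W x y) := by
        intro x
        rw [Finset.mul_sum]
        exact Finset.sum_congr rfl fun y _ => by ring
      calc ∑ x, ∑ y, a x * W x y * Real.log (W x y)
          = ∑ x, a x * ∑ y, W x y * Real.log (W x y) :=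
            Finset.sum_congr rfl fun x _ => estep x
        _ = a 0 * ∑ y, W 0 y * Real.log (W 0 y)
            + ∑ x ∈ Finset.univ.erase 0, a x * ∑ y, W x y * Real.log (W x y) :=
            (Finset.add_sum_erase _ _ (Finset.mem_univ 0)).symm
        _ = a 0 * (-Real.log ((s : ℝ) + 2)) + (A - a 0) * ∑ y, W 1 y * Real.log (W 1 y) := by
            rw [e1row0]
            congr 1
            calc ∑ x ∈ Finset.univ.erase 0, a x * ∑ y, W x y * Real.log (W x y)
                = ∑ x ∈ Finset.univ.erase 0, a x * ∑ y, W 1 y * Real.log (W 1 y) :=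
                  Finset.sum_congr rfl fun x hx => by
                    rw [e1rowx x (Finset.ne_of_mem_erase hx)]
              _ = (∑ x ∈ Finset.univ.erase 0, a x) * ∑ y, W 1 y * Real.log (W 1 y) :=
                  (Finset.sum_mul _ _ _).symm
              _ = (A - a 0) * ∑ y, W 1 y * Real.log (W 1 y) := by
                  rw [Finset.sum_erase_eq_sub (Finset.mem_univ 0)]
    have hQsum : ∑ y, ∑ x', a x' * W x' y = A := by
      rw [Finset.sum_comm]
      calc ∑ x', ∑ y, a x' * W x' y = ∑ x', a x' * ∑ y, W x' y := by
            exact Finset.sum_congr rfl fun x _ => (Finset.mul_sum _ _ _).symm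
        _ = A := by
            simp only [hWs, mul_one]
            exact hAdef.symm
    have hGibbs := gibbs_aux (fun y => ∑ x', a x' * W x' y)
      (fun y => Finset.sum_nonneg fun i _ => mul_nonneg (ha i) (hW0 i y)) hA0 hQsum
    have hentdef : ent (fun y => W 1 y) = -∑ y, W 1 y * Real.log (W 1 y) := by
      simp [ent]
    calc ∑ x, ∑ y, a x * W x y * Real.log (W x y / ((∑ x', a x' * W x' y) / A))
        = ∑ x, ∑ y, (a x * W x y * Real.log (W x y)
            - a x * W x y * Real.log (∑ x', a x' * W x' y)
            + a x * W x y * Real.log A) := by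
          exact Finset.sum_congr rfl fun x _ => Finset.sum_congr rfl fun y _ => hsplit x y
      _ = (∑ x, ∑ y, a x * W x y * Real.log (W x y))
          - (∑ y, (∑ x', a x' * W x' y) * Real.log (∑ x', a x' * W x' y)) + A * Real.log A := by
          simp only [Finset.sum_add_distrib, Finset.sum_sub_distrib]
          rw [e2, e3]
      _ = (A * Real.log A - A * Real.log ((s : ℝ) + 2)
            - ∑ y, (∑ x', a x' * W x' y) * Real.log (∑ x', a x' * W x' y))
          + (A - a 0) * (Real.log ((s : ℝ) + 2) + ∑ y, W 1 y * Real.log (W 1 y)) := by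
          rw [eT1]; ring
      _ ≤ 0 + (A - a 0) * (Real.log ((s : ℝ) + 2) + ∑ y, W 1 y * Real.log (W 1 y)) := by
          have : A * Real.log A - A * Real.log ((s : ℝ) + 2)
              ≤ ∑ y, (∑ x', a x' * W x' y) * Real.log (∑ x', a x' * W x' y) := hGibbs
          linarith
      _ = (A - a 0) * (Real.log ((s : ℝ) + 2) - ent (fun y => W 1 y)) := by
          rw [hentdef]; ring

/-- Upper bound on `I_P(X₂;Y₁|X₁)` via the symmetry property. -/
theorem stmt10 (r1 r2 s1 s2 : ℕ)
    (W1 : Fin (r1 + 3) → Fin (r2 + 3) → Fin (s1 + 2) → ℝ)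
    (W2 : Fin (r1 + 3) → Fin (r2 + 3) → Fin (s2 + 2) → ℝ)
    (hW : GenPTT W1 W2) (hSym : SymProp W1 W2)
    (P : Fin (r1 + 3) → Fin (r2 + 3) → ℝ) (hP : IsJointProbDist P) :
    condMI2 P W1 ≤ (marg1 P 0 - P 0 0) * C2 W1 0 +
      (1 - marg1 P 0 - marg2 P 0 + P 0 0) * C2 W1 1 := by
  obtain ⟨hW1nn, _, hW1sum, _, _, _, _, hU1, hperm1, _⟩ := hW
  obtain ⟨_, hC2sym⟩ := hSym
  have key : ∀ x1, ∑ x2, ∑ y1, P x1 x2 * W1 x1 x2 y1 *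
      Real.log (W1 x1 x2 y1 / ((∑ x2', P x1 x2' * W1 x1 x2' y1) / marg1 P x1))
      ≤ (marg1 P x1 - P x1 0) * C2 W1 x1 := by
    intro x1
    have h := inner_bound_aux (n := r2 + 2) (s := s1) (fun x2 => P x1 x2)
      (fun x2 y => W1 x1 x2 y) (fun x2 => hP.1 x1 x2) (fun x2 y => hW1nn x1 x2 y)
      (fun x2 => hW1sum x1 x2) (fun y => hU1 x1 y) (fun x2 hx2 => hperm1 x1 x2 hx2)
    simpa [marg1, C2] using h
  calc condMI2 P W1 ≤ ∑ x1, (marg1 P x1 - P x1 0) * C2 W1 x1 := by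
        unfold condMI2
        exact Finset.sum_le_sum fun x1 _ => key x1
    _ = (marg1 P 0 - P 0 0) * C2 W1 0
        + ∑ x1 ∈ Finset.univ.erase 0, (marg1 P x1 - P x1 0) * C2 W1 x1 :=
        (Finset.add_sum_erase _ _ (Finset.mem_univ 0)).symm
    _ = (marg1 P 0 - P 0 0) * C2 W1 0 + (1 - marg1 P 0 - marg2 P 0 + P 0 0) * C2 W1 1 := by
        congr 1
        have h2 : ∑ x1 ∈ Finset.univ.erase 0, (marg1 P x1 - P x1 0) * C2 W1 x1
            = (∑ x1 ∈ Finset.univ.erase 0, (marg1 P x1 - P x1 0)) * C2 W1 1 := by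
          rw [Finset.sum_mul]
          exact Finset.sum_congr rfl fun x1 hx1 => by
            rw [hC2sym x1 (Finset.ne_of_mem_erase hx1)]
        have h3 : ∑ x1 ∈ Finset.univ.erase 0, (marg1 P x1 - P x1 0)
            = 1 - marg1 P 0 - marg2 P 0 + P 0 0 := by
          rw [Finset.sum_erase_eq_sub (Finset.mem_univ 0)]
          have hm1 : ∑ x1, marg1 P x1 = 1 := by
            simpa [marg1] using hP.2
          have hm2 : ∑ x1, P x1 0 = marg2 P 0 := rfl
          rw [Finset.sum_sub_distrib, hm1, hm2]
          ring
        rw [h2, h3]
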